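/- arXiv:1204.6555 — 2 statements merged into one kernel-verified Lean document; each statement's English description precedes it below -/
import Mathlib

section
/- (Robbins' theorem) A finite connected graph is bridgeless if and only if it admits a strongly connected orientation, i.e., an orientation of its edges such that for every ordered pair of vertices there is a directed path from the first to the second. -/
open scoped RealInnerProductSpace
open Classical

structure Digraph' (V E : Type) where
  s : E → V
  t : E → V

namespace Digraph'

variable {V E : Type} [Fintype V] [Fintype E] [DecidableEq V] [DecidableEq E]

/-- boundary map ∂ : C₁ → C₀, ∂e = source e − target e -/
noncomputable def bd (G : Digraph' V E) :
    EuclideanSpace ℝ E →ₗ[ℝ] EuclideanSpace ℝ V :=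
  Matrix.toEuclideanLin (Matrix.of fun v e =>
    (if G.s e = v then (1:ℝ) else 0) - (if G.t e = v then (1:ℝ) else 0))

/-- coboundary map δ : C₀ → C₁ -/
noncomputable def cobd (G : Digraph' V E) :
    EuclideanSpace ℝ V →ₗ[ℝ] EuclideanSpace ℝ E :=
  Matrix.toEuclideanLin (Matrix.of fun e v =>
    (if G.s e = v then (1:ℝ) else 0) - (if G.t e = v then (1:ℝ) else 0))

/-- orthogonal projection onto H₁(Γ,ℝ) = ker ∂, valued in the ambient space -/
noncomputable def proj (G : Digraph' V E) (x : EuclideanSpace ℝ E) : EuclideanSpace ℝ E :=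
  (Submodule.orthogonalProjection (LinearMap.ker (bd G)) x : EuclideanSpace ℝ E)

/-- reachability using only edges in S (edges traversable both ways) -/
def Reach (G : Digraph' V E) (S : Set E) : V → V → Prop :=
  Relation.ReflTransGen (fun a b => ∃ e ∈ S, (G.s e = a ∧ G.t e = b) ∨ (G.s e = b ∧ G.t e = a))

def Connected (G : Digraph' V E) : Prop := ∀ a b : V, Reach G Set.univ a b

/-- an edge is a bridge if its removal disconnects the graph -/
def IsBridge (G : Digraph' V E) (e : E) : Prop := ¬ ∀ a b : V, Reach G {e}ᶜ a b

def Bridgeless (G : Digraph' V E) : Prop := ∀ e : E, ¬ IsBridge G e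

/-- directed reachability -/
def DirReach (G : Digraph' V E) : V → V → Prop :=
  Relation.ReflTransGen (fun a b => ∃ e, G.s e = a ∧ G.t e = b)

def StronglyConnected (G : Digraph' V E) : Prop := ∀ a b : V, DirReach G a b

/-- a step of a walk: an edge with a direction of traversal (`true` = forward) -/
def stepSource (G : Digraph' V E) (st : E × Bool) : V := if st.2 then G.s st.1 else G.t st.1
def stepTarget (G : Digraph' V E) (st : E × Bool) : V := if st.2 then G.t st.1 else G.s st.1

/-- `IsWalk G u l v` : `l` is a walk from `u` to `v` -/
def IsWalk (G : Digraph' V E) : V → List (E × Bool) → V → Prop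
  | u, [], w => u = w
  | u, st :: rest, w => stepSource G st = u ∧ IsWalk G (stepTarget G st) rest w

/-- a path: a walk with all vertices distinct -/
def IsPath (G : Digraph' V E) (u : V) (l : List (E × Bool)) (v : V) : Prop :=
  IsWalk G u l v ∧ (u :: l.map (stepTarget G)).Nodup

/-- a circuit at u: a nonempty closed walk with distinct vertices and distinct edges -/
def IsCircuit (G : Digraph' V E) (u : V) (l : List (E × Bool)) : Prop :=
  l ≠ [] ∧ IsWalk G u l u ∧ (l.map (stepTarget G)).Nodup ∧ (l.map Prod.fst).Nodup

/-- directed walk -/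
def IsDirWalk (G : Digraph' V E) : V → List E → V → Prop
  | u, [], w => u = w
  | u, e :: rest, w => G.s e = u ∧ IsDirWalk G (G.t e) rest w

def IsDirPath (G : Digraph' V E) (u : V) (l : List E) (v : V) : Prop :=
  IsDirWalk G u l v ∧ (u :: l.map G.t).Nodup

/-- directed circuit at u -/
def IsDirCircuit (G : Digraph' V E) (u : V) (l : List E) : Prop :=
  l ≠ [] ∧ IsDirWalk G u l u ∧ (l.map G.t).Nodup ∧ l.Nodup

/-- signed edge-sum λ(w) ∈ C₁ of a walk -/
noncomputable def lam (_G : Digraph' V E) (l : List (E × Bool)) : EuclideanSpace ℝ E :=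
  (l.map fun st => (if st.2 then (1:ℝ) else -1) • EuclideanSpace.single st.1 (1:ℝ)).sum

/-- edge-sum λ(p) of a directed walk -/
noncomputable def dirlam (_G : Digraph' V E) (l : List E) : EuclideanSpace ℝ E :=
  (l.map fun e => EuclideanSpace.single e (1:ℝ)).sum

/-- a graph-theoretical cycle: an integral 1-cycle with coefficients in {0, ±1} -/
def IsCycle (G : Digraph' V E) (γ : EuclideanSpace ℝ E) : Prop :=
  bd G γ = 0 ∧ ∀ j, γ j = 0 ∨ γ j = 1 ∨ γ j = -1

/-- an elementary cycle -/
def Elementary (G : Digraph' V E) (γ : EuclideanSpace ℝ E) : Prop :=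
  IsCycle G γ ∧ γ ≠ 0 ∧
    ¬ ∃ γ₁ γ₂, IsCycle G γ₁ ∧ IsCycle G γ₂ ∧ γ₁ ≠ 0 ∧ γ₂ ≠ 0 ∧
      (∀ j, γ₁ j = 0 ∨ γ₂ j = 0) ∧ γ = γ₁ + γ₂

noncomputable def plusSet (_G : Digraph' V E) (γ : EuclideanSpace ℝ E) : Finset E :=
  Finset.univ.filter fun j => γ j = 1

noncomputable def minusSet (_G : Digraph' V E) (γ : EuclideanSpace ℝ E) : Finset E :=
  Finset.univ.filter fun j => γ j = -1

end Digraph'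

/-- Reorient the edges of `G` according to `o : E → Bool` (`true` = keep direction). -/
def Digraph'.reorient {V E : Type} (G : Digraph' V E) (o : E → Bool) : Digraph' V E :=
  ⟨fun e => if o e then G.s e else G.t e, fun e => if o e then G.t e else G.s e⟩


namespace RobbinsAux

open Digraph'

variable {V E : Type} [Fintype V] [Fintype E] [DecidableEq V] [DecidableEq E]
variable {G : Digraph' V E}

@[simp] lemma reorient_s (o : E → Bool) (f : E) :
    (G.reorient o).s f = if o f then G.s f else G.t f := rfl

@[simp] lemma reorient_t (o : E → Bool) (f : E) :
    (G.reorient o).t f = if o f then G.t f else G.s f := rfl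

lemma walk_nil {x y : V} (h : IsWalk G x [] y) : x = y := h

lemma walk_cons {st : E × Bool} {l : List (E × Bool)} {x y : V}
    (h : IsWalk G x (st :: l) y) :
    stepSource G st = x ∧ IsWalk G (stepTarget G st) l y := h

lemma walk_append : ∀ {l₁ : List (E × Bool)} {x y z : V} {l₂ : List (E × Bool)},
    IsWalk G x l₁ y → IsWalk G y l₂ z → IsWalk G x (l₁ ++ l₂) z
  | [], x, y, z, l₂, h1, h2 => by
      have : x = y := h1
      subst this; simpa using h2
  | st :: rest, x, y, z, l₂, h1, h2 => by
      obtain ⟨hs, hw⟩ := walk_cons h1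
      exact ⟨hs, walk_append hw h2⟩

lemma walk_split : ∀ {l₁ l₂ : List (E × Bool)} {x z : V},
    IsWalk G x (l₁ ++ l₂) z → ∃ y, IsWalk G x l₁ y ∧ IsWalk G y l₂ z
  | [], l₂, x, z, h => ⟨x, rfl, h⟩
  | st :: rest, l₂, x, z, h => by
      obtain ⟨hs, hw⟩ := walk_cons h
      obtain ⟨y, hy1, hy2⟩ := walk_split hw
      exact ⟨y, ⟨hs, hy1⟩, hy2⟩

lemma sources_mem : ∀ {l : List (E × Bool)} {x y : V}, IsWalk G x l y →
    ∀ st ∈ l, stepSource G st ∈ x :: l.map (stepTarget G)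
  | [], x, y, _, st, hst => by simp at hst
  | st' :: rest, x, y, h, st, hst => by
      obtain ⟨hs, hw⟩ := walk_cons h
      rcases List.mem_cons.1 hst with h1 | h1
      · subst h1; simp [hs]
      · have := sources_mem hw st h1
        simp only [List.map_cons, List.mem_cons] at this ⊢
        tauto

lemma pathify : ∀ (n : ℕ) {l : List (E × Bool)} {x y : V}, l.length ≤ n → IsWalk G x l y →
    ∃ l', IsWalk G x l' y ∧ (x :: l'.map (stepTarget G)).Nodup ∧ ∀ st ∈ l', st ∈ l
  | 0, l, x, y, hn, h => by
      have : l = [] := List.length_eq_zero_iff.1 (Nat.le_zero.1 hn)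
      subst this
      have : x = y := h
      exact ⟨[], this, by simp, by simp⟩
  | n + 1, l, x, y, hn, h => by
      by_cases hx : x ∈ l.map (stepTarget G)
      · obtain ⟨st, hstl, hstx⟩ := List.mem_map.1 hx
        obtain ⟨l₁, l₂, hleq⟩ := List.append_of_mem hstl
        subst hleq
        obtain ⟨y₁, hy1, hy2⟩ := walk_split h
        obtain ⟨hsrc, hw2⟩ := walk_cons hy2
        rw [hstx] at hw2
        have hlen : l₂.length ≤ n := by
          have := hn
          simp only [List.length_append, List.length_cons] at this
          omega
        obtain ⟨l', h1, h2, h3⟩ := pathify n hlen hw2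
        exact ⟨l', h1, h2, fun st' hst' => by
          have := h3 st' hst'; simp [this]⟩
      · cases l with
        | nil =>
            have : x = y := h
            exact ⟨[], this, by simp, by simp⟩
        | cons st rest =>
            obtain ⟨hsrc, hw⟩ := walk_cons h
            have hlen : rest.length ≤ n := by simpa using hn
            obtain ⟨l', h1, h2, h3⟩ := pathify n hlen hw
            refine ⟨st :: l', ⟨hsrc, h1⟩, ?_, ?_⟩
            · simp only [List.map_cons, List.nodup_cons] at h2 ⊢
              refine ⟨?_, h2⟩
              intro hmem
              apply hx
              rcases List.mem_cons.1 hmem with h4 | h4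
              · exact h4 ▸ (by simp)
              · obtain ⟨st', hst', hst'x⟩ := List.mem_map.1 h4
                exact List.mem_map.2 ⟨st', List.mem_cons_of_mem _ (h3 st' hst'), hst'x⟩
            · intro st' hst'
              rcases List.mem_cons.1 hst' with h4 | h4
              · simp [h4]
              · exact List.mem_cons_of_mem _ (h3 st' h4)

lemma edge_nodup : ∀ {l : List (E × Bool)} {x y : V}, IsWalk G x l y →
    (x :: l.map (stepTarget G)).Nodup → (l.map Prod.fst).Nodup
  | [], x, y, _, _ => by simp
  | st :: rest, x, y, h, hnd => by
      obtain ⟨hsrc, hw⟩ := walk_cons h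
      rw [List.map_cons, List.nodup_cons] at hnd ⊢
      obtain ⟨hx, hnd'⟩ := hnd
      refine ⟨?_, edge_nodup hw hnd'⟩
      intro hmem
      obtain ⟨st', hst', hfst⟩ := List.mem_map.1 hmem
      -- st' has the same edge as st
      have hpair : (stepSource G st' = stepSource G st ∧ stepTarget G st' = stepTarget G st)
          ∨ (stepSource G st' = stepTarget G st ∧ stepTarget G st' = stepSource G st) := by
        rcases Bool.eq_false_or_eq_true st.2 with h2 | h2 <;>
        rcases Bool.eq_false_or_eq_true st'.2 with h2' | h2' <;>
          simp [stepSource, stepTarget, h2, h2', hfst] <;> tauto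
      have hsrc' := sources_mem hw st' hst'
      apply hx
      rcases hpair with ⟨h1, h2⟩ | ⟨h1, h2⟩
      · -- stepSource st' = x, so x appears among stepTarget st :: rest targets
        rw [h1, hsrc] at hsrc'
        exact hsrc'
      · -- stepTarget st' = x, and stepTarget st' ∈ rest targets
        have : stepTarget G st' ∈ (rest.map (stepTarget G)) := List.mem_map.2 ⟨st', hst', rfl⟩
        rw [h2, hsrc] at this
        exact List.mem_cons_of_mem _ this

lemma trunc (S : Finset V) : ∀ {l : List (E × Bool)} {x y : V}, IsWalk G x l y →
    x ∉ S → y ∈ S →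
    ∃ (l₁ : List (E × Bool)) (z : V), IsWalk G x l₁ z ∧ z ∈ S ∧ l₁.Sublist l ∧
      ∀ st ∈ l₁, stepSource G st ∉ S
  | [], x, y, h, hx, hy => by
      have : x = y := h
      exact absurd (this ▸ hy) hx
  | st :: rest, x, y, h, hx, hy => by
      obtain ⟨hsrc, hw⟩ := walk_cons h
      by_cases ht : stepTarget G st ∈ S
      · refine ⟨[st], stepTarget G st, ⟨hsrc, rfl⟩, ht, ?_, ?_⟩
        · simpa using List.nil_sublist rest
        · intro st' hst'
          rcases List.mem_singleton.1 hst' with h4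
          rw [h4, hsrc]; exact hx
      · obtain ⟨l₁, z, h1, h2, h3, h4⟩ := trunc S hw ht hy
        refine ⟨st :: l₁, z, ⟨hsrc, h1⟩, h2, h3.cons₂ st, ?_⟩
        intro st' hst'
        rcases List.mem_cons.1 hst' with h5 | h5
        · rw [h5, hsrc]; exact hx
        · exact h4 st' h5

lemma reach_walk {T : Set E} {x y : V} (h : Reach G T x y) :
    ∃ l, IsWalk G x l y ∧ ∀ st ∈ l, st.1 ∈ T := by
  induction h using Relation.ReflTransGen.head_induction_on with
  | refl => exact ⟨[], rfl, by simp⟩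
  | @head a c hrel hr ih =>
    obtain ⟨l, hw, hm⟩ := ih
    obtain ⟨f, hf, hc⟩ := hrel
    rcases hc with ⟨h1, h2⟩ | ⟨h1, h2⟩
    · refine ⟨(f, true) :: l, ⟨by simpa [stepSource] using h1, ?_⟩, ?_⟩
      · simpa [stepTarget, h2] using hw
      · intro st hst
        rcases List.mem_cons.1 hst with h3 | h3
        · simpa [h3] using hf
        · exact hm st h3
    · refine ⟨(f, false) :: l, ⟨by simpa [stepSource] using h2, ?_⟩, ?_⟩
      · simpa [stepTarget, h1] using hw
      · intro st hst
        rcases List.mem_cons.1 hst with h3 | h3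
        · simpa [h3] using hf
        · exact hm st h3

lemma cross (S : Finset V) {x y : V} (h : Reach G Set.univ x y) (hy : y ∉ S) :
    x ∈ S → ∃ u v f, u ∈ S ∧ v ∉ S ∧ ((G.s f = u ∧ G.t f = v) ∨ (G.s f = v ∧ G.t f = u)) := by
  induction h using Relation.ReflTransGen.head_induction_on with
  | refl => exact fun hx => absurd hx hy
  | @head a c hrel hr ih =>
    intro hx
    by_cases hc : c ∈ S
    · exact ih hc
    · obtain ⟨f, _, hfc⟩ := hrel
      exact ⟨a, c, f, hx, hc, hfc⟩

def RIn (H : Digraph' V E) (S : Finset V) (a b : V) : Prop :=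
  a ∈ S ∧ b ∈ S ∧ ∃ f, H.s f = a ∧ H.t f = b

def Good (G : Digraph' V E) (o : E → Bool) (S : Finset V) : Prop :=
  ∀ a ∈ S, ∀ b ∈ S, Relation.ReflTransGen (RIn (G.reorient o) S) a b

lemma rin_step {S S' : Finset V} {o o' : E → Bool} (hS : S ⊆ S')
    (hagree : ∀ f, G.s f ∈ S → G.t f ∈ S → o' f = o f) {a b : V}
    (h : RIn (G.reorient o) S a b) : RIn (G.reorient o') S' a b := by
  obtain ⟨ha, hb, f, hf1, hf2⟩ := h
  have hends : G.s f ∈ S ∧ G.t f ∈ S := by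
    have h1 := hf1; have h2 := hf2
    by_cases hof : o f <;> simp [hof] at h1 h2
    · exact ⟨by rw [h1]; exact ha, by rw [h2]; exact hb⟩
    · exact ⟨by rw [h2]; exact hb, by rw [h1]; exact ha⟩
  have heq := hagree f hends.1 hends.2
  refine ⟨hS ha, hS hb, f, ?_, ?_⟩ <;>
    simp only [reorient_s, reorient_t, heq] <;>
    simp only [reorient_s, reorient_t] at hf1 hf2
  · exact hf1
  · exact hf2

lemma extend (G : Digraph' V E) (S : Finset V) (o : E → Bool) (hg : Good G o S)
    (u v : V) (e : E) (hu : u ∈ S) (hv : v ∉ S)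
    (he : (G.s e = u ∧ G.t e = v) ∨ (G.s e = v ∧ G.t e = u))
    (hreach : Reach G ({e}ᶜ : Set E) v u) :
    ∃ (S' : Finset V) (o' : E → Bool), S ⊆ S' ∧ v ∈ S' ∧ Good G o' S' := by
  classical
  obtain ⟨W, hWwalk, hWmem⟩ := reach_walk hreach
  obtain ⟨Q, hQwalk, hQnodup, hQsub⟩ := pathify W.length le_rfl hWwalk
  have hQe : ∀ st ∈ Q, st.1 ≠ e := fun st hst => by
    have := hWmem st (hQsub st hst); simpa using this
  have hQedges : (Q.map Prod.fst).Nodup := edge_nodup hQwalk hQnodup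
  obtain ⟨Q₁, z, hQ₁walk, hz, hQ₁sub, hQ₁src⟩ := trunc S hQwalk hv hu
  obtain ⟨d, hd1, hd2⟩ : ∃ d : Bool, stepSource G (e, d) = u ∧ stepTarget G (e, d) = v := by
    rcases he with ⟨h1, h2⟩ | ⟨h1, h2⟩
    · exact ⟨true, by simp [stepSource, h1], by simp [stepTarget, h2]⟩
    · exact ⟨false, by simp [stepSource, h2], by simp [stepTarget, h1]⟩
  set M : List (E × Bool) := (e, d) :: Q₁ with hM
  have hMwalk : IsWalk G u M z := ⟨hd1, hd2 ▸ hQ₁walk⟩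
  have hMedges : (M.map Prod.fst).Nodup := by
    simp only [hM, List.map_cons, List.nodup_cons]
    constructor
    · intro hmem
      obtain ⟨st, hst, h1⟩ := List.mem_map.1 hmem
      exact hQe st (hQ₁sub.mem hst) h1
    · exact (hQ₁sub.map Prod.fst).nodup hQedges
  have hcond : ∀ st ∈ M, stepSource G st ∉ S ∨ stepTarget G st ∉ S := by
    intro st hst
    rcases List.mem_cons.1 hst with h1 | h1
    · right; rw [h1, hd2]; exact hv
    · left; exact hQ₁src st h1
  set o' : E → Bool := fun f => if h : ∃ b, (f, b) ∈ M then h.choose else o f with ho'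
  have hchoice : ∀ st ∈ M, o' st.1 = st.2 := by
    intro st hst
    have hex : ∃ b, (st.1, b) ∈ M := ⟨st.2, hst⟩
    have hval : o' st.1 = hex.choose := by rw [ho']; exact dif_pos hex
    have hmem2 : (st.1, hex.choose) ∈ M := hex.choose_spec
    have := List.inj_on_of_nodup_map hMedges hmem2 hst rfl
    exact hval.trans (congrArg Prod.snd this)
  have hagree : ∀ f, G.s f ∈ S → G.t f ∈ S → o' f = o f := by
    intro f hs ht
    rw [ho']
    refine dif_neg ?_
    rintro ⟨b', hmem⟩
    rcases hcond (f, b') hmem with h1 | h1 <;>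
      rcases Bool.eq_false_or_eq_true b' with h2 | h2 <;>
      simp [stepSource, stepTarget, h2] at h1 <;> exact h1 (by assumption)
  have hreor : ∀ st ∈ M, (G.reorient o').s st.1 = stepSource G st ∧
      (G.reorient o').t st.1 = stepTarget G st := by
    intro st hst
    simp only [reorient_s, reorient_t, hchoice st hst]
    exact ⟨rfl, rfl⟩
  set S' : Finset V := S ∪ (M.map (stepTarget G)).toFinset with hS'
  have hSS' : S ⊆ S' := Finset.subset_union_left
  have htgtS' : ∀ st ∈ M, stepTarget G st ∈ S' := by
    intro st hst
    exact Finset.mem_union_right _ (List.mem_toFinset.2 (List.mem_map.2 ⟨st, hst, rfl⟩))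
  have hsrcS' : ∀ st ∈ M, stepSource G st ∈ S' := by
    intro st hst
    have := sources_mem hMwalk st hst
    rcases List.mem_cons.1 this with h1 | h1
    · exact h1 ▸ hSS' hu
    · exact Finset.mem_union_right _ (List.mem_toFinset.2 h1)
  have hvS' : v ∈ S' := by
    have : stepTarget G (e, d) ∈ S' := htgtS' (e, d) List.mem_cons_self
    rwa [hd2] at this
  have chain : ∀ (N : List (E × Bool)) (x zz : V), IsWalk G x N zz →
      (∀ st ∈ N, st ∈ M) → x ∈ S' →
      Relation.ReflTransGen (RIn (G.reorient o') S') x zz := by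
    intro N
    induction N with
    | nil => intro x zz hw _ _; exact (walk_nil hw) ▸ Relation.ReflTransGen.refl
    | cons st N ih =>
        intro x zz hw hmem hx
        obtain ⟨h1, h2⟩ := walk_cons hw
        have hstM := hmem st List.mem_cons_self
        have step : RIn (G.reorient o') S' x (stepTarget G st) :=
          ⟨hx, htgtS' st hstM, st.1, (hreor st hstM).1.trans h1, (hreor st hstM).2⟩
        exact Relation.ReflTransGen.head step
          (ih _ _ h2 (fun st' hst' => hmem st' (List.mem_cons_of_mem _ hst')) (htgtS' st hstM))
  have hto : ∀ w ∈ M.map (stepTarget G),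
      Relation.ReflTransGen (RIn (G.reorient o') S') u w ∧
      Relation.ReflTransGen (RIn (G.reorient o') S') w z := by
    intro w hw
    obtain ⟨st, hstM, hstw⟩ := List.mem_map.1 hw
    obtain ⟨M₁, M₂, hMeq⟩ := List.append_of_mem hstM
    have hMwalk' : IsWalk G u (M₁ ++ st :: M₂) z := hMeq ▸ hMwalk
    obtain ⟨y, hy1, hy2⟩ := walk_split hMwalk'
    obtain ⟨hy3, hy4⟩ := walk_cons hy2
    have w1 : IsWalk G u (M₁ ++ [st]) w := walk_append hy1 ⟨hy3, hstw⟩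
    have hmem1 : ∀ st' ∈ M₁ ++ [st], st' ∈ M := by
      intro st' hst'
      rw [hMeq]
      rcases List.mem_append.1 hst' with h1 | h1
      · exact List.mem_append.2 (Or.inl h1)
      · rw [List.mem_singleton.1 h1]; exact List.mem_append.2 (Or.inr List.mem_cons_self)
    have hmem2 : ∀ st' ∈ M₂, st' ∈ M := by
      intro st' hst'
      rw [hMeq]
      exact List.mem_append.2 (Or.inr (List.mem_cons_of_mem _ hst'))
    constructor
    · exact chain _ _ _ w1 hmem1 (hSS' hu)
    · exact chain _ _ _ (hstw ▸ hy4) hmem2 (hstw ▸ htgtS' st hstM)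
  have hshift : ∀ a ∈ S, ∀ b ∈ S, Relation.ReflTransGen (RIn (G.reorient o') S') a b := by
    intro a ha b hb
    exact Relation.ReflTransGen.mono (fun p q hpq => rin_step hSS' hagree hpq) _ _ (hg a ha b hb)
  refine ⟨S', o', hSS', hvS', ?_⟩
  intro a ha b hb
  have hstep1 : ∃ a', a' ∈ S ∧ Relation.ReflTransGen (RIn (G.reorient o') S') a a' := by
    rcases Finset.mem_union.1 ha with h1 | h1
    · exact ⟨a, h1, Relation.ReflTransGen.refl⟩
    · exact ⟨z, hz, (hto a (List.mem_toFinset.1 h1)).2⟩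
  have hstep2 : ∃ b', b' ∈ S ∧ Relation.ReflTransGen (RIn (G.reorient o') S') b' b := by
    rcases Finset.mem_union.1 hb with h1 | h1
    · exact ⟨b, h1, Relation.ReflTransGen.refl⟩
    · exact ⟨u, hu, (hto b (List.mem_toFinset.1 h1)).1⟩
  obtain ⟨a', ha', hra⟩ := hstep1
  obtain ⟨b', hb', hrb⟩ := hstep2
  exact hra.trans ((hshift a' ha' b' hb').trans hrb)

lemma grow (G : Digraph' V E) (hconn : Connected G)
    (hbl : ∀ e : E, ∀ a b : V, Reach G ({e}ᶜ : Set E) a b) :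
    ∀ n (S : Finset V) (o : E → Bool), Sᶜ.card ≤ n → S.Nonempty → Good G o S →
    ∃ o', Good G o' Finset.univ := by
  intro n
  induction n with
  | zero =>
      intro S o hc _ hg
      have hS : S = Finset.univ := by
        have : Sᶜ = ∅ := Finset.card_eq_zero.1 (Nat.le_zero.1 hc)
        rwa [Finset.compl_eq_empty_iff] at this
      exact ⟨o, hS ▸ hg⟩
  | succ n ih =>
      intro S o hc hne hg
      by_cases hSu : S = Finset.univ
      · exact ⟨o, hSu ▸ hg⟩
      · obtain ⟨b, hb⟩ : ∃ b, b ∉ S := by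
          by_contra h; push_neg at h; exact hSu (Finset.eq_univ_iff_forall.2 h)
        obtain ⟨a₀, ha₀⟩ := hne
        obtain ⟨u, v, e, hu, hv, hcse⟩ := cross S (hconn a₀ b) hb ha₀
        obtain ⟨S', o', hSS', hvS', hg'⟩ := extend G S o hg u v e hu hv hcse (hbl e v u)
        have hss : S ⊂ S' := ⟨hSS', fun h => hv (h hvS')⟩
        have hcard : S'ᶜ.card ≤ n := by
          have h1 : S'ᶜ ⊂ Sᶜ := by
            rw [Finset.compl_ssubset_compl]; exact hss
          have := Finset.card_lt_card h1
          omega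
        exact ih S' o' hcard ⟨v, hvS'⟩ hg'

end RobbinsAux

open Digraph' in
theorem stmt3 {V E : Type} [Fintype V] [Fintype E] [DecidableEq V] [DecidableEq E]
    (G : Digraph' V E) (hconn : Connected G) :
    Bridgeless G ↔ ∃ o : E → Bool, StronglyConnected (G.reorient o) := by
  classical
  constructor
  · intro hbl
    have hbl' : ∀ e : E, ∀ a b : V, Reach G ({e}ᶜ : Set E) a b := fun e => not_not.mp (hbl e)
    rcases isEmpty_or_nonempty V with hV | hV
    · exact ⟨fun _ => true, fun a b => (hV.false a).elim⟩
    · obtain ⟨a₀⟩ := hV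
      have hbase : RobbinsAux.Good G (fun _ => true) {a₀} := by
        intro a ha b hb
        rw [Finset.mem_singleton] at ha hb
        rw [ha, hb]
      obtain ⟨o', hg'⟩ := RobbinsAux.grow G hconn hbl' (Fintype.card V)
        {a₀} (fun _ => true) (Finset.card_le_univ _) ⟨a₀, Finset.mem_singleton_self a₀⟩ hbase
      refine ⟨o', fun a b => ?_⟩
      exact Relation.ReflTransGen.mono
        (fun p q hpq => hpq.2.2) _ _ (hg' a (Finset.mem_univ a) b (Finset.mem_univ b))
  · rintro ⟨o, hsc⟩ e hbridge
    apply hbridge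
    intro a b
    by_contra hab
    set G' := G.reorient o with hG'
    set A : V → Prop := fun x => Reach G ({e}ᶜ : Set E) a x with hA
    have hAa : A a := Relation.ReflTransGen.refl
    have hstep : ∀ f, f ≠ e → ∀ x y : V, G'.s f = x → G'.t f = y →
        (∃ g ∈ ({e}ᶜ : Set E), (G.s g = x ∧ G.t g = y) ∨ (G.s g = y ∧ G.t g = x)) := by
      intro f hf x y h1 h2
      refine ⟨f, by simpa using hf, ?_⟩
      by_cases hof : o f <;> simp [hG', hof] at h1 h2
      · exact Or.inl ⟨h1, h2⟩
      · exact Or.inr ⟨h2, h1⟩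
    have hiff : ∀ f, f ≠ e → ∀ x y : V, G'.s f = x → G'.t f = y → (A x ↔ A y) := by
      intro f hf x y h1 h2
      obtain ⟨g, hg1, hg2⟩ := hstep f hf x y h1 h2
      constructor
      · intro hx; exact hx.tail ⟨g, hg1, hg2⟩
      · intro hy; exact hy.tail ⟨g, hg1, Or.symm (by tauto)⟩
    have key : ∀ (P : V → Prop), (∀ f, f ≠ e → ∀ x y : V, G'.s f = x → G'.t f = y → (P x ↔ P y)) →
        (P (G'.s e) → P (G'.t e)) → ∀ x y : V, DirReach G' x y → P x → P y := by
      intro P hP hee x y h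
      induction h with
      | refl => exact id
      | tail h1 h2 ih =>
          intro hx
          obtain ⟨f, hf1, hf2⟩ := h2
          by_cases hfe : f = e
          · subst hfe
            rw [hf1, hf2] at hee
            exact hee (ih hx)
          · exact (hP f hfe _ _ hf1 hf2).mp (ih hx)
    by_cases h1 : A (G'.s e) → A (G'.t e)
    · exact hab (key A hiff h1 a b (hsc a b) hAa)
    · rw [_root_.not_imp] at h1
      obtain ⟨hs, ht⟩ := h1
      have := key (fun x => ¬ A x)
        (fun f hf x y hx hy => not_congr (hiff f hf x y hx hy))
        (fun hns => absurd hs hns) b a (hsc b a) hab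
      exact this hAa
end

section
/- The lattices π(Λ) and H_Z = Λ ∩ H are mutually dual lattices in H = H_1(Γ,ℝ): for every λ ∈ Λ, (π(λ), γ) ∈ ℤ for all γ ∈ H_Z, and every linear functional on H taking integer values on H_Z is given by inner product with some element of π(Λ). -/
open scoped RealInnerProductSpace
open Classical

namespace Digraph'

section Aux

variable {V E : Type} [Fintype V] [Fintype E] [DecidableEq V] [DecidableEq E]

lemma euclid_sum_apply {α : Type*} (s : Finset α) (f : α → EuclideanSpace ℝ E) (j : E) :
    (∑ a ∈ s, f a) j = ∑ a ∈ s, f a j := by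
  classical
  induction s using Finset.cons_induction with
  | empty => rfl
  | cons a s ha ih => rw [Finset.sum_cons, Finset.sum_cons, PiLp.add_apply, ih]

lemma bd_apply' (G : Digraph' V E) (x : EuclideanSpace ℝ E) (v : V) :
    bd G x v = ∑ e, ((if G.s e = v then (1:ℝ) else 0) - (if G.t e = v then 1 else 0)) * x e := by
  simp [bd, Matrix.toEuclideanLin_apply, Matrix.mulVec, dotProduct]

lemma bd_single (G : Digraph' V E) (e : E) :
    bd G (EuclideanSpace.single e (1:ℝ)) =
      EuclideanSpace.single (G.s e) (1:ℝ) - EuclideanSpace.single (G.t e) 1 := by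
  ext v
  rw [bd_apply', PiLp.sub_apply]
  simp [EuclideanSpace.single_apply, mul_ite, eq_comm]

lemma exists_chain (G : Digraph' V E) (a b : V) (h : Reach G Set.univ a b) :
    ∃ c : EuclideanSpace ℝ E, (∀ j, ∃ n : ℤ, c j = n) ∧
      bd G c = EuclideanSpace.single a 1 - EuclideanSpace.single b 1 := by
  induction h with
  | refl => exact ⟨0, fun j => ⟨0, by simp⟩, by simp⟩
  | @tail b' b hab hstep ih =>
    obtain ⟨c, hci, hcb⟩ := ih
    obtain ⟨e, -, he⟩ := hstep
    rcases he with ⟨hs, ht⟩ | ⟨hs, ht⟩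
    · refine ⟨c + EuclideanSpace.single e 1, ?_, ?_⟩
      · intro j
        obtain ⟨n, hn⟩ := hci j
        by_cases hj : j = e
        · exact ⟨n + 1, by subst hj; simp [PiLp.add_apply, hn, EuclideanSpace.single_apply]⟩
        · exact ⟨n, by simp [PiLp.add_apply, hn, EuclideanSpace.single_apply, hj]⟩
      · rw [map_add, hcb, bd_single, hs, ht]; abel
    · refine ⟨c - EuclideanSpace.single e 1, ?_, ?_⟩
      · intro j
        obtain ⟨n, hn⟩ := hci j
        by_cases hj : j = e
        · exact ⟨n - 1, by subst hj; simp [PiLp.sub_apply, hn, EuclideanSpace.single_apply]⟩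
        · exact ⟨n, by simp [PiLp.sub_apply, hn, EuclideanSpace.single_apply, hj]⟩
      · rw [map_sub, hcb, bd_single, hs, ht]; abel

lemma sum_smul_sub (G : Digraph' V E) (x : EuclideanSpace ℝ E) (w : V → EuclideanSpace ℝ E) :
    ∑ e, x e • (w (G.s e) - w (G.t e)) = ∑ v, bd G x v • w v := by
  have key : ∀ e : E, x e • (w (G.s e) - w (G.t e)) =
      ∑ v, (((if G.s e = v then (1:ℝ) else 0) - (if G.t e = v then 1 else 0)) * x e) • w v := by
    intro e
    simp only [sub_mul, sub_smul, ite_mul, one_mul, zero_mul, ite_smul, zero_smul,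
      Finset.sum_sub_distrib, Finset.sum_ite_eq, Finset.mem_univ, if_true]
    rw [smul_sub]
  calc ∑ e, x e • (w (G.s e) - w (G.t e))
      = ∑ e, ∑ v, (((if G.s e = v then (1:ℝ) else 0) - (if G.t e = v then 1 else 0)) * x e) • w v :=
        Finset.sum_congr rfl fun e _ => key e
    _ = ∑ v, bd G x v • w v := by
        rw [Finset.sum_comm]
        refine Finset.sum_congr rfl fun v _ => ?_
        rw [bd_apply', Finset.sum_smul]

lemma decomp (G : Digraph' V E) (c : V → EuclideanSpace ℝ E)
    (x : EuclideanSpace ℝ E) (hx : bd G x = 0) :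
    x = ∑ e, x e • (EuclideanSpace.single e (1:ℝ) + c (G.s e) - c (G.t e)) := by
  have h1 : ∀ e : E, x e • (EuclideanSpace.single e (1:ℝ) + c (G.s e) - c (G.t e)) =
      x e • EuclideanSpace.single e (1:ℝ) + x e • (c (G.s e) - c (G.t e)) := by
    intro e
    rw [← smul_add]
    congr 1
    abel
  rw [Finset.sum_congr rfl fun e _ => h1 e, Finset.sum_add_distrib, sum_smul_sub G x c, hx]
  have h2 : ∑ e, x e • EuclideanSpace.single e (1:ℝ) = x := by
    ext j
    rw [euclid_sum_apply]
    simp [PiLp.smul_apply, EuclideanSpace.single_apply]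
  simp [h2]

lemma inner_proj_eq (G : Digraph' V E) (l γ : EuclideanSpace ℝ E)
    (hγ : γ ∈ LinearMap.ker (bd G)) :
    (inner ℝ (proj G l) γ : ℝ) = ∑ j, l j * γ j := by
  have : (inner ℝ (proj G l) γ : ℝ) = inner ℝ l γ := by
    unfold proj
    rw [← Submodule.starProjection_apply, Submodule.inner_starProjection_left_eq_right,
      Submodule.starProjection_eq_self_iff.mpr hγ]
  rw [this, PiLp.inner_apply]
  simp [mul_comm]

end Aux

end Digraph'

open Digraph' in
theorem stmt5 {V E : Type} [Fintype V] [Fintype E] [DecidableEq V] [DecidableEq E]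
    (G : Digraph' V E) (hconn : Connected G) :
    (∀ l : EuclideanSpace ℝ E, (∀ j, ∃ n : ℤ, l j = n) →
        ∀ γ ∈ LinearMap.ker (bd G), (∀ j, ∃ n : ℤ, γ j = n) →
          ∃ n : ℤ, (inner ℝ (proj G l) γ : ℝ) = n) ∧
    (∀ f : LinearMap.ker (bd G) →ₗ[ℝ] ℝ,
        (∀ γ : LinearMap.ker (bd G), (∀ j, (γ : EuclideanSpace ℝ E) j ∈ Set.range ((↑) : ℤ → ℝ)) →
          ∃ n : ℤ, f γ = n) →
        ∃ l : EuclideanSpace ℝ E, (∀ j, ∃ n : ℤ, l j = n) ∧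
          ∀ x : LinearMap.ker (bd G), f x = (inner ℝ (proj G l) (x : EuclideanSpace ℝ E) : ℝ)) := by
  constructor
  · intro l hl γ hγ hγint
    rw [inner_proj_eq G l γ hγ]
    choose m hm using hl
    choose n hn using hγint
    refine ⟨∑ j, m j * n j, ?_⟩
    push_cast
    exact Finset.sum_congr rfl fun j _ => by rw [hm, hn]
  · intro f hf
    rcases isEmpty_or_nonempty V with hV | hV
    · have hE : IsEmpty E := ⟨fun e => hV.false (G.s e)⟩
      refine ⟨0, fun j => hE.elim j, fun x => ?_⟩
      have hx : x = 0 := Subtype.ext (PiLp.ext fun j => hE.elim j)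
      rw [hx, map_zero]
      simp
    · obtain ⟨r⟩ := hV
      choose c hcint hcbd using fun v => exists_chain G r v (hconn r v)
      set γ : E → EuclideanSpace ℝ E :=
        fun e => EuclideanSpace.single e (1:ℝ) + c (G.s e) - c (G.t e) with hγdef
      have hγker : ∀ e, γ e ∈ LinearMap.ker (bd G) := by
        intro e
        rw [LinearMap.mem_ker, hγdef]
        simp only [map_sub, map_add, bd_single, hcbd]
        abel
      have hγint : ∀ e j, ∃ n : ℤ, γ e j = n := by
        intro e j
        obtain ⟨ns, hns⟩ := hcint (G.s e) j
        obtain ⟨nt, hnt⟩ := hcint (G.t e) j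
        by_cases hj : j = e
        · exact ⟨1 + ns - nt, by
            subst hj; simp [hγdef, PiLp.sub_apply, PiLp.add_apply, EuclideanSpace.single_apply,
              hns, hnt]⟩
        · exact ⟨ns - nt, by
            simp [hγdef, PiLp.sub_apply, PiLp.add_apply, EuclideanSpace.single_apply, hj,
              hns, hnt]⟩
      set Γ : E → LinearMap.ker (bd G) := fun e => ⟨γ e, hγker e⟩ with hΓdef
      set l : EuclideanSpace ℝ E := (WithLp.equiv 2 (E → ℝ)).symm (fun e => f (Γ e)) with hldef
      have hlapp : ∀ j, l j = f (Γ j) := fun j => rfl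
      refine ⟨l, ?_, ?_⟩
      · intro j
        rw [hlapp]
        refine hf (Γ j) fun i => ?_
        obtain ⟨n, hn⟩ := hγint j i
        exact ⟨n, hn.symm⟩
      · intro x
        have hxdec : (x : EuclideanSpace ℝ E) = ∑ e, (x : EuclideanSpace ℝ E) e • γ e :=
          decomp G c x (LinearMap.mem_ker.mp x.2)
        have hxK : x = ∑ e, (x : EuclideanSpace ℝ E) e • Γ e := by
          apply Subtype.ext
          rw [Submodule.coe_sum]
          simpa using hxdec
        rw [inner_proj_eq G l (x : EuclideanSpace ℝ E) x.2]
        conv_lhs => rw [hxK]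
        rw [map_sum]
        refine Finset.sum_congr rfl fun e _ => ?_
        rw [map_smul, hlapp, smul_eq_mul, mul_comm]
end
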